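/- arXiv:1910.08933 — 2 statements merged into one kernel-verified Lean document; each statement's English description precedes it below -/
import Mathlib

section
/- Suppose X has density f with all moments finite, f is differentiable on [x0, ∞) for some x0 > 1, and the function L(x) = -x f'(x)/f(x) has a limit ℓ (in [0, ∞]) as x → ∞. Then ℓ = ∞. -/
open Filter Set MeasureTheory

/-- Lemma 1(i): if all moments of a density f are finite, f is
differentiable and positive on [x0,∞), and L(x) = -x f'(x)/f(x) has a limit ℓ
in the extended reals as x → ∞, then ℓ = ∞. -/
theorem stmt_10 (f : ℝ → ℝ) (x0 : ℝ) (hx0 : 1 < x0)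
    (hnn : ∀ x, 0 ≤ f x)
    (hdens : ∫ x, f x = 1)
    (hint : Integrable f)
    (hmom : ∀ k : ℕ, Integrable (fun x => |x| ^ k * f x))
    (hdiff : ∀ x, x0 ≤ x → DifferentiableAt ℝ f x)
    (hpos : ∀ x, x0 ≤ x → 0 < f x)
    (ℓ : EReal)
    (hlim : Tendsto (fun x => ((-x * deriv f x / f x : ℝ) : EReal)) atTop (nhds ℓ)) :
    ℓ = ⊤ := by
  by_contra hne
  have hlt : ℓ < ⊤ := lt_top_iff_ne_top.2 hne
  obtain ⟨z, hz1, hz2⟩ := exists_between hlt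
  have hzbot : z ≠ ⊥ := by
    intro h; rw [h] at hz1; exact not_lt_bot hz1
  set c : ℝ := max z.toReal 1 with hcdef
  have hc1 : (1:ℝ) ≤ c := le_max_right _ _
  have hℓc : ℓ < (c : EReal) := by
    refine lt_of_lt_of_le hz1 ?_
    rw [← EReal.coe_toReal hz2.ne hzbot]
    exact EReal.coe_le_coe_iff.2 (le_max_left _ _)
  have hev : ∀ᶠ x in atTop, -x * deriv f x / f x < c := by
    have := hlim.eventually (Iio_mem_nhds hℓc)
    filter_upwards [this] with x hx
    exact EReal.coe_lt_coe_iff.1 hx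
  obtain ⟨b, hb⟩ := eventually_atTop.1 hev
  set a : ℝ := max x0 b with hadef
  have hax0 : x0 ≤ a := le_max_left _ _
  have hab : b ≤ a := le_max_right _ _
  have ha1 : 1 < a := lt_of_lt_of_le hx0 hax0
  have ha0 : 0 < a := lt_trans one_pos ha1
  set k : ℕ := ⌈c⌉₊ with hkdef
  have hkc : c ≤ (k : ℝ) := Nat.le_ceil c
  set C : ℝ := f a * a ^ c with hCdef
  have hfa : 0 < f a := hpos a hax0
  have hC : 0 < C := mul_pos hfa (Real.rpow_pos_of_pos ha0 c)
  -- the auxiliary function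
  set g : ℝ → ℝ := fun x => Real.log (f x) + c * Real.log x with hgdef
  have hg : ∀ x, x0 ≤ x → HasDerivAt g (deriv f x / f x + c * x⁻¹) x := by
    intro x hx
    have hx0' : (0:ℝ) < x := lt_trans one_pos (lt_of_lt_of_le hx0 hx)
    have h1 : HasDerivAt (fun y => Real.log (f y)) (deriv f x / f x) x :=
      ((hdiff x hx).hasDerivAt).log (hpos x hx).ne'
    have h2 : HasDerivAt (fun y => c * Real.log y) (c * x⁻¹) x :=
      (Real.hasDerivAt_log hx0'.ne').const_mul c
    exact h1.add h2
  have hcont : ContinuousOn g (Ici a) := fun x hx =>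
    (hg x (le_trans hax0 hx)).continuousAt.continuousWithinAt
  have hmono : MonotoneOn g (Ici a) := by
    refine (strictMonoOn_of_deriv_pos (convex_Ici a) hcont ?_).monotoneOn
    intro x hx
    rw [interior_Ici] at hx
    have hxa : a < x := hx
    have hxx0 : x0 ≤ x := le_trans hax0 hxa.le
    have hxpos : (0:ℝ) < x := lt_trans ha0 hxa
    have hF : 0 < f x := hpos x hxx0
    rw [(hg x hxx0).deriv]
    have hL : -x * deriv f x / f x < c := hb x (le_trans hab hxa.le)
    have hL' : -x * deriv f x < c * f x := (div_lt_iff₀ hF).1 hL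
    have hnum : 0 < deriv f x * x + c * f x := by nlinarith
    have heq : deriv f x / f x + c * x⁻¹ = (deriv f x * x + c * f x) / (f x * x) := by
      field_simp
    rw [heq]
    exact div_pos hnum (mul_pos hF hxpos)
  -- key pointwise lower bound
  have hkey : ∀ x ∈ Ici a, C ≤ |x| ^ k * f x := by
    intro x hx
    have hxa : a ≤ x := hx
    have hxx0 : x0 ≤ x := le_trans hax0 hxa
    have hx1 : 1 ≤ x := le_trans ha1.le hxa
    have hxpos : (0:ℝ) < x := lt_of_lt_of_le one_pos hx1
    have hF : 0 < f x := hpos x hxx0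
    have hga : g a ≤ g x := hmono (self_mem_Ici) hx hxa
    have hlog : Real.log C ≤ Real.log (f x * x ^ c) := by
      rw [hCdef, Real.log_mul hfa.ne' (Real.rpow_pos_of_pos ha0 c).ne',
        Real.log_mul hF.ne' (Real.rpow_pos_of_pos hxpos c).ne',
        Real.log_rpow ha0, Real.log_rpow hxpos]
      exact hga
    have h1 : C ≤ f x * x ^ c := by
      have := Real.exp_le_exp.2 hlog
      rwa [Real.exp_log hC, Real.exp_log (mul_pos hF (Real.rpow_pos_of_pos hxpos c))] at this
    have h2 : x ^ c ≤ x ^ (k : ℝ) := Real.rpow_le_rpow_of_exponent_le hx1 hkc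
    have h3 : f x * x ^ c ≤ f x * x ^ (k : ℝ) :=
      mul_le_mul_of_nonneg_left h2 hF.le
    have h4 : x ^ (k : ℝ) = x ^ k := Real.rpow_natCast x k
    rw [abs_of_pos hxpos]
    calc C ≤ f x * x ^ (k:ℝ) := le_trans h1 h3
      _ = x ^ k * f x := by rw [h4]; ring
  -- contradiction with integrability
  have hIcc : IntegrableOn (fun x => |x| ^ k * f x) (Ici a) := (hmom k).integrableOn
  have hconst : IntegrableOn (fun _ : ℝ => C) (Ici a) := by
    refine hIcc.mono' aestronglyMeasurable_const ?_
    rw [ae_restrict_iff' measurableSet_Ici]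
    refine ae_of_all _ fun x hx => ?_
    rw [Real.norm_eq_abs, abs_of_pos hC]
    exact hkey x hx
  have : C = 0 ∨ volume (Ici a) < ⊤ := by
    have := (integrable_const_iff (c := C)).1 hconst
    rcases this with h | h
    · exact Or.inl h
    · have h' := h.measure_univ_lt_top
      rw [Measure.restrict_apply_univ] at h'
      exact Or.inr h'
  rcases this with h | h
  · exact hC.ne' h
  · rw [Real.volume_Ici] at h
    exact (lt_irrefl _ h)
end

section
/- For the density f(x) = c·exp(-|x|/(ln|x|)^α) on ℝ (with α ∈ (0,1], f(0)=0, c a normalizing constant), the integral ∫_{10}^∞ (-ln f(x))/(x² ln x) dx is finite, while ∫_{10}^∞ (-ln f(x))/(1+x²) dx is infinite. -/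
open Filter Set MeasureTheory Topology

lemma log_ge_one {x : ℝ} (hx : 10 ≤ x) : 1 ≤ Real.log x := by
  rw [Real.le_log_iff_exp_le (by linarith)]
  calc Real.exp 1 ≤ 2.7182818286 := Real.exp_one_lt_d9.le
  _ ≤ x := by linarith

lemma lemA (α c : ℝ) (hα : α ∈ Set.Ioc (0:ℝ) 1) :
    ∫⁻ x in Set.Ici (10:ℝ),
      ENNReal.ofReal ((-Real.log c + x / Real.log x ^ α) / (x ^ 2 * Real.log x)) ≠ ⊤ := by
  obtain ⟨hα0, hα1⟩ := hα
  set ψ : ℝ → ℝ := fun x => Real.log x ^ (-α - 1) * x⁻¹ with hψ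
  set h : ℝ → ℝ := fun x => |Real.log c| * x ^ (-2 : ℝ) + ψ x with hh
  -- ψ is integrable on Ioi 10 via FTC
  have hψint : IntegrableOn ψ (Set.Ioi (10:ℝ)) := by
    have hcont : ContinuousWithinAt (fun x => -(α⁻¹ * Real.log x ^ (-α))) (Set.Ici (10:ℝ)) 10 := by
      have : ContinuousAt (fun x => -(α⁻¹ * Real.log x ^ (-α))) 10 := by
        have h0 : ContinuousAt (fun x => Real.log x ^ (-α)) 10 :=
          (Real.continuousAt_log (by norm_num)).rpow_const
            (Or.inl (ne_of_gt (by linarith [log_ge_one (le_refl (10:ℝ))])))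
        exact (h0.const_mul _).neg
      exact this.continuousWithinAt
    have hderiv : ∀ x ∈ Set.Ioi (10:ℝ),
        HasDerivAt (fun x => -(α⁻¹ * Real.log x ^ (-α))) (ψ x) x := by
      intro x hx
      have hx10 : (10:ℝ) ≤ x := le_of_lt hx
      have hx0 : x ≠ 0 := by positivity
      have hlx : (0:ℝ) < Real.log x := by linarith [log_ge_one hx10]
      have h1 : HasDerivAt (fun y => Real.log y ^ (-α))
          ((-α) * Real.log x ^ (-α - 1) * x⁻¹) x := by
        have := (Real.hasDerivAt_rpow_const (p := -α) (Or.inl hlx.ne')).comp x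
          (Real.hasDerivAt_log hx0)
        exact this
      have h2 := (h1.const_mul α⁻¹).neg
      refine h2.congr_deriv ?_
      rw [hψ]; dsimp only
      rw [neg_mul, neg_mul, mul_neg, neg_neg, ← mul_assoc, ← mul_assoc, inv_mul_cancel₀ hα0.ne', one_mul]
    have hpos : ∀ x ∈ Set.Ioi (10:ℝ), 0 ≤ ψ x := by
      intro x hx
      have hx10 : (10:ℝ) ≤ x := le_of_lt hx
      have hlx : (0:ℝ) < Real.log x := by linarith [log_ge_one hx10]
      have : (0:ℝ) < x := by linarith
      positivity
    have htend : Tendsto (fun x => -(α⁻¹ * Real.log x ^ (-α))) atTop (𝓝 0) := by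
      have := ((tendsto_rpow_neg_atTop hα0).comp Real.tendsto_log_atTop).const_mul α⁻¹
      simpa using this.neg
    exact integrableOn_Ioi_deriv_of_nonneg hcont hderiv hpos htend
  have hhint : IntegrableOn h (Set.Ici (10:ℝ)) := by
    rw [integrableOn_Ici_iff_integrableOn_Ioi]
    exact (((integrableOn_Ioi_rpow_of_lt (by norm_num : (-2:ℝ) < -1)
      (by norm_num : (0:ℝ) < 10)).const_mul _).add hψint)
  have key : ∫⁻ x in Set.Ici (10:ℝ),
      ENNReal.ofReal ((-Real.log c + x / Real.log x ^ α) / (x ^ 2 * Real.log x))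
      ≤ ∫⁻ x in Set.Ici (10:ℝ), ENNReal.ofReal (h x) := by
    apply setLIntegral_mono' measurableSet_Ici
    intro x hx
    apply ENNReal.ofReal_le_ofReal
    have hx10 : (10:ℝ) ≤ x := hx
    have hx0 : (0:ℝ) < x := by linarith
    have hlx : (1:ℝ) ≤ Real.log x := log_ge_one hx10
    have hlx0 : (0:ℝ) < Real.log x := by linarith
    have hlxa : (0:ℝ) < Real.log x ^ α := Real.rpow_pos_of_pos hlx0 _
    have e1 : (-Real.log c + x / Real.log x ^ α) / (x ^ 2 * Real.log x)
        = (-Real.log c) / (x ^ 2 * Real.log x) + (x / Real.log x ^ α) / (x ^ 2 * Real.log x) := by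
      ring
    rw [e1]
    have t1 : (-Real.log c) / (x ^ 2 * Real.log x) ≤ |Real.log c| * x ^ (-2 : ℝ) := by
      rw [Real.rpow_neg hx0.le, Real.rpow_two]
      have h1 : (-Real.log c) / (x ^ 2 * Real.log x) ≤ |Real.log c| / (x ^ 2 * Real.log x) := by
        apply div_le_div_of_nonneg_right ?_ (by positivity)
        · exact (neg_le_abs _)
      refine h1.trans ?_
      rw [div_le_iff₀ (by positivity)]
      calc |Real.log c| * (x ^ 2)⁻¹ * (x ^ 2 * Real.log x)
          = |Real.log c| * Real.log x * ((x^2)⁻¹ * x^2) := by ring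
        _ = |Real.log c| * Real.log x := by rw [inv_mul_cancel₀ (by positivity), mul_one]
        _ ≥ |Real.log c| * 1 := by
            apply mul_le_mul_of_nonneg_left hlx (abs_nonneg _)
        _ = |Real.log c| := mul_one _
    have t2 : (x / Real.log x ^ α) / (x ^ 2 * Real.log x) = ψ x := by
      have e2 : Real.log x ^ (-α - 1) = (Real.log x ^ α * Real.log x)⁻¹ := by
        rw [show -α - 1 = -(α + 1) by ring, Real.rpow_neg hlx0.le, Real.rpow_add hlx0,
          Real.rpow_one]
      rw [hψ]; dsimp only
      rw [e2]
      field_simp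
    rw [t2]
    exact add_le_add t1 le_rfl
  exact ne_top_of_le_ne_top hhint.lintegral_lt_top.ne key

lemma lemB (α c : ℝ) (hα0 : 0 < α) (hα1 : α ≤ 1) :
    ∫⁻ x in Set.Ici (10:ℝ),
      ENNReal.ofReal ((-Real.log c + x / Real.log x ^ α) / (1 + x ^ 2)) = ⊤ := by
  set L := |Real.log c| with hL
  set M : ℝ := max 10 ((4 * L) ^ 2) with hM
  have hM10 : (10:ℝ) ≤ M := le_max_left _ _
  have hM0 : (0:ℝ) < M := by linarith
  set φ : ℝ → ℝ := fun y => 1 / (4 * (y * Real.log y)) with hφ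
  -- pointwise lower bound on Ici M
  have hpt : ∀ x, M ≤ x → φ x ≤ (-Real.log c + x / Real.log x ^ α) / (1 + x ^ 2) := by
    intro x hx
    have hx10 : (10:ℝ) ≤ x := le_trans hM10 hx
    have hx0 : (0:ℝ) < x := by linarith
    have hlx : (1:ℝ) ≤ Real.log x := log_ge_one hx10
    have hlx0 : (0:ℝ) < Real.log x := by linarith
    have hlxa : (0:ℝ) < Real.log x ^ α := Real.rpow_pos_of_pos hlx0 _
    have hle1 : Real.log x ^ α ≤ Real.log x := by
      calc Real.log x ^ α ≤ Real.log x ^ (1:ℝ) :=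
            Real.rpow_le_rpow_of_exponent_le hlx hα1
        _ = Real.log x := Real.rpow_one _
    have hd1 : x / Real.log x ≤ x / Real.log x ^ α := by gcongr
    -- sqrt bounds
    have hsq : 4 * L ≤ Real.sqrt x := by
      have h1 : (4 * L) ^ 2 ≤ x := le_trans (le_max_right _ _) hx
      calc 4 * L = Real.sqrt ((4 * L) ^ 2) := (Real.sqrt_sq (by positivity)).symm
        _ ≤ Real.sqrt x := Real.sqrt_le_sqrt h1
    have hlog2sqrt : Real.log x ≤ 2 * Real.sqrt x := by
      have h1 : Real.log (Real.sqrt x) ≤ Real.sqrt x - 1 :=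
        Real.log_le_sub_one_of_pos (Real.sqrt_pos.mpr hx0)
      have h2 : Real.log (Real.sqrt x) = Real.log x / 2 := Real.log_sqrt hx0.le
      linarith [Real.sqrt_nonneg x]
    have hsqx : Real.sqrt x * Real.sqrt x = x := Real.mul_self_sqrt hx0.le
    have hkey : L ≤ x / (2 * Real.log x) := by
      rw [le_div_iff₀ (by positivity)]
      nlinarith [Real.sqrt_nonneg x]
    have hA : x / (2 * Real.log x) ≤ -Real.log c + x / Real.log x ^ α := by
      have h1 : Real.log c ≤ L := le_abs_self _
      have h2 : x / Real.log x - x / (2 * Real.log x) = x / (2 * Real.log x) := by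
        field_simp; ring
      have h3 : Real.log c ≤ x / (2 * Real.log x) := le_trans h1 hkey
      linarith [hd1]
    have hA0 : (0:ℝ) ≤ x / (2 * Real.log x) := by positivity
    have e1 : φ x = (x / (2 * Real.log x)) / (2 * x ^ 2) := by
      rw [hφ]; field_simp; ring
    rw [e1]
    exact div_le_div₀ (by linarith) hA (by positivity) (by nlinarith)
  -- ∫⁻ φ over Ici M is ⊤
  set G : ℝ → ℝ := fun y => Real.log (Real.log y) / 4 with hG
  have hJ : ∫⁻ x in Set.Ici M, ENNReal.ofReal (φ x) = ⊤ := by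
    by_contra hne
    set J := ∫⁻ x in Set.Ici M, ENNReal.ofReal (φ x) with hJdef
    have chain : ∀ b, M ≤ b → ENNReal.ofReal (G b - G M) ≤ J := by
      intro b hb
      have hφcont : ContinuousOn φ (Set.Icc M b) := by
        apply continuousOn_const.div
        · apply continuousOn_const.mul
          apply continuousOn_id.mul
          apply Real.continuousOn_log.mono
          intro y hy
          have : (10:ℝ) ≤ y := le_trans hM10 hy.1
          simp only [Set.mem_compl_iff, Set.mem_singleton_iff]
          intro h; rw [h] at this; norm_num at this
        · intro y hy
          have hy10 : (10:ℝ) ≤ y := le_trans hM10 hy.1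
          have hy0 : (0:ℝ) < y := by linarith
          have := log_ge_one hy10
          positivity
      have hderiv : ∀ y ∈ Set.uIcc M b, HasDerivAt G (φ y) y := by
        intro y hy
        rw [Set.uIcc_of_le hb] at hy
        have hy10 : (10:ℝ) ≤ y := le_trans hM10 hy.1
        have hy0 : (0:ℝ) < y := by linarith
        have hly : (1:ℝ) ≤ Real.log y := log_ge_one hy10
        have hly0 : (0:ℝ) < Real.log y := by linarith
        have h1 : HasDerivAt (fun z => Real.log (Real.log z))
            ((Real.log y)⁻¹ * y⁻¹) y :=
          (Real.hasDerivAt_log hly0.ne').comp y (Real.hasDerivAt_log hy0.ne')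
        have h2 := h1.div_const 4
        refine h2.congr_deriv ?_
        rw [hφ]; field_simp
      have hII : IntervalIntegrable φ volume M b := by
        rw [intervalIntegrable_iff_integrableOn_Icc_of_le hb]
        exact hφcont.integrableOn_Icc
      have hFTC : ∫ y in M..b, φ y = G b - G M :=
        intervalIntegral.integral_eq_sub_of_hasDerivAt hderiv hII
      have hIoc : IntegrableOn φ (Set.Ioc M b) :=
        hφcont.integrableOn_Icc.mono_set Set.Ioc_subset_Icc_self
      have hnn : 0 ≤ᵐ[volume.restrict (Set.Ioc M b)] φ := by
        filter_upwards [ae_restrict_mem measurableSet_Ioc] with y hy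
        have hy10 : (10:ℝ) ≤ y := le_trans hM10 hy.1.le
        have hy0 : (0:ℝ) < y := by linarith
        have := log_ge_one hy10
        positivity
      calc ENNReal.ofReal (G b - G M) = ENNReal.ofReal (∫ y in Set.Ioc M b, φ y) := by
            rw [← hFTC, intervalIntegral.integral_of_le hb]
        _ = ∫⁻ y in Set.Ioc M b, ENNReal.ofReal (φ y) :=
            ofReal_integral_eq_lintegral_ofReal hIoc hnn
        _ ≤ J := lintegral_mono_set (Set.Ioc_subset_Ioi_self.trans Set.Ioi_subset_Ici_self)
    have htend : Tendsto (fun b => G b - G M) atTop atTop := by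
      have h1 : Tendsto (fun b => Real.log (Real.log b)) atTop atTop :=
        Real.tendsto_log_atTop.comp Real.tendsto_log_atTop
      have h2 : Tendsto G atTop atTop := h1.atTop_div_const (by norm_num)
      simpa [sub_eq_add_neg] using h2.atTop_add tendsto_const_nhds
    obtain ⟨b, hb1, hb2⟩ := ((eventually_ge_atTop M).and
      (htend.eventually_gt_atTop J.toReal)).exists
    have hle := chain b hb1
    have := ENNReal.toReal_mono hne hle
    rw [ENNReal.toReal_ofReal (by linarith [ENNReal.toReal_nonneg (a := J)])] at this
    linarith
  rw [eq_top_iff]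
  calc (⊤ : ENNReal) = ∫⁻ x in Set.Ici M, ENNReal.ofReal (φ x) := hJ.symm
    _ ≤ ∫⁻ x in Set.Ici M,
        ENNReal.ofReal ((-Real.log c + x / Real.log x ^ α) / (1 + x ^ 2)) := by
        apply setLIntegral_mono' measurableSet_Ici
        intro x hx
        exact ENNReal.ofReal_le_ofReal (hpt x hx)
    _ ≤ _ := lintegral_mono_set (Set.Ici_subset_Ici.mpr hM10)

/-- Example 1: for the density f(x) = c·exp(-|x|/(ln|x|)^α),
α ∈ (0,1], the integral K_*[f] over [10,∞) is finite while the Krein-type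
integral K[f] over [10,∞) is infinite. -/
theorem stmt_16 (α c : ℝ) (hα : α ∈ Set.Ioc (0 : ℝ) 1) (hc : 0 < c)
    (f : ℝ → ℝ)
    (hf : ∀ x : ℝ, x ≠ 0 → f x = c * Real.exp (-(|x| / Real.log |x| ^ α)))
    (hf0 : f 0 = 0) :
    (∫⁻ x in Set.Ici (10 : ℝ),
        ENNReal.ofReal (-Real.log (f x) / (x ^ 2 * Real.log x)) ≠ ⊤) ∧
    (∫⁻ x in Set.Ici (10 : ℝ),
        ENNReal.ofReal (-Real.log (f x) / (1 + x ^ 2)) = ⊤) := by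
  have hlog : ∀ x : ℝ, x ∈ Set.Ici (10:ℝ) →
      -Real.log (f x) = -Real.log c + x / Real.log x ^ α := by
    intro x hx
    have hx10 : (10:ℝ) ≤ x := hx
    have hx0 : (0:ℝ) < x := by linarith
    rw [hf x hx0.ne', Real.log_mul hc.ne' (Real.exp_ne_zero _), Real.log_exp,
      abs_of_pos hx0]
    ring
  constructor
  · have := lemA α c hα
    rw [setLIntegral_congr_fun measurableSet_Ici
      (fun x hx => by rw [hlog x hx])]
    exact this
  · have := lemB α c hα.1 hα.2
    rw [setLIntegral_congr_fun measurableSet_Ici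
      (fun x hx => by rw [hlog x hx])]
    exact this
end
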